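/- For every t ≥ 0, (1/2π) ∫₀^{2π} |cosh(t) − sinh(t)e^{iθ}|^{−3} dθ = (1/2π) ∫₀^{2π} √(e^{2t}cos²θ + e^{−2t}sin²θ) dθ, both being equal to (2e^t/π)·E(√(1 − e^{−4t})), where E is the complete elliptic integral of the second kind. -/

import Mathlib

open Real intervalIntegral

/- ### Auxiliary lemmas -/

lemma sinsq_periodic' (f : ℝ → ℝ) : Function.Periodic (fun θ => f (sin θ ^ 2)) π := by
  intro x
  simp [sin_add_pi]

lemma integral_sinsq_half' (f : ℝ → ℝ) (hf : Continuous fun θ => f (sin θ ^ 2)) :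
    ∫ θ in (0:ℝ)..π, f (sin θ ^ 2) = 2 * ∫ u in (0:ℝ)..(π/2), f (sin u ^ 2) := by
  have h1 : ∫ θ in (π/2:ℝ)..π, f (sin θ ^ 2) = ∫ u in (0:ℝ)..(π/2), f (sin u ^ 2) := by
    have h := intervalIntegral.integral_comp_sub_left (a := (0:ℝ)) (b := π/2)
      (fun θ => f (sin θ ^ 2)) π
    simp only [sin_pi_sub] at h
    rw [h, show π - π/2 = π/2 by ring, sub_zero]
  rw [← intervalIntegral.integral_add_adjacent_intervals
    (hf.intervalIntegrable (0:ℝ) (π/2)) (hf.intervalIntegrable (π/2) π), h1]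
  ring

lemma integral_sinsq_two_pi' (f : ℝ → ℝ) (hf : Continuous fun θ => f (sin θ ^ 2)) :
    ∫ θ in (0:ℝ)..(2*π), f (sin θ ^ 2) = 4 * ∫ u in (0:ℝ)..(π/2), f (sin u ^ 2) := by
  have h2 : ∫ θ in (π:ℝ)..(2*π), f (sin θ ^ 2) = ∫ θ in (0:ℝ)..π, f (sin θ ^ 2) := by
    have := (sinsq_periodic' f).intervalIntegral_add_eq π 0
    simpa [two_mul] using this
  rw [← intervalIntegral.integral_add_adjacent_intervals
    (hf.intervalIntegrable (0:ℝ) π) (hf.intervalIntegrable π (2*π)), h2,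
    integral_sinsq_half' f hf]
  ring

lemma integral_cossq_pi' (f : ℝ → ℝ) (hf : Continuous fun θ => f (sin θ ^ 2)) :
    ∫ θ in (0:ℝ)..π, f (cos θ ^ 2) = 2 * ∫ u in (0:ℝ)..(π/2), f (sin u ^ 2) := by
  have h1 : ∀ θ : ℝ, f (cos θ ^ 2) = (fun x => f (sin x ^ 2)) (θ + π/2) := by
    intro θ
    simp [sin_add_pi_div_two]
  calc ∫ θ in (0:ℝ)..π, f (cos θ ^ 2)
      = ∫ θ in (0:ℝ)..π, (fun x => f (sin x ^ 2)) (θ + π/2) := by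
        simp only [h1]
    _ = ∫ x in (0 + π/2:ℝ)..(π + π/2), f (sin x ^ 2) := by
        exact intervalIntegral.integral_comp_add_right (fun x => f (sin x ^ 2)) (π/2)
    _ = ∫ x in (0:ℝ)..π, f (sin x ^ 2) := by
        have := (sinsq_periodic' f).intervalIntegral_add_eq (π/2) 0
        simpa [add_comm] using this
    _ = 2 * ∫ u in (0:ℝ)..(π/2), f (sin u ^ 2) := integral_sinsq_half' f hf

/-- The key identity `E(k) = (1-k²)·I(k)` between the complete elliptic
integral of the second kind and `I(k) = ∫₀^{π/2} (1-k²sin²u)^{-3/2} du`. -/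
lemma elliptic_key' (m : ℝ) (hm0 : 0 ≤ m) (hm1 : m < 1) :
    ∫ u in (0:ℝ)..(π/2), Real.sqrt (1 - m * sin u ^ 2)
      = (1 - m) * ∫ u in (0:ℝ)..(π/2),
          ((1 - m * sin u ^ 2) * Real.sqrt (1 - m * sin u ^ 2))⁻¹ := by
  have hDpos : ∀ u : ℝ, 0 < 1 - m * sin u ^ 2 := by
    intro u
    nlinarith [sin_sq_le_one u, sq_nonneg (sin u)]
  have hrpos : ∀ u : ℝ, 0 < Real.sqrt (1 - m * sin u ^ 2) := fun u => Real.sqrt_pos.2 (hDpos u)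
  have hcD : Continuous fun u : ℝ => 1 - m * sin u ^ 2 := by continuity
  have hc1 : Continuous fun u : ℝ => Real.sqrt (1 - m * sin u ^ 2) :=
    Real.continuous_sqrt.comp hcD
  have hc2 : Continuous fun u : ℝ => ((1 - m * sin u ^ 2) * Real.sqrt (1 - m * sin u ^ 2))⁻¹ := by
    refine (hcD.mul hc1).inv₀ ?_
    intro u
    exact ne_of_gt (mul_pos (hDpos u) (hrpos u))
  set F : ℝ → ℝ := fun u => m * (sin u * cos u) / Real.sqrt (1 - m * sin u ^ 2) with hF
  have hderiv : ∀ u : ℝ, HasDerivAt F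
      (Real.sqrt (1 - m * sin u ^ 2)
        - (1 - m) * ((1 - m * sin u ^ 2) * Real.sqrt (1 - m * sin u ^ 2))⁻¹) u := by
    intro u
    have hnum : HasDerivAt (fun u => m * (sin u * cos u))
        (m * (cos u * cos u + sin u * (-sin u))) u :=
      ((hasDerivAt_sin u).mul (hasDerivAt_cos u)).const_mul m
    have hD : HasDerivAt (fun u : ℝ => 1 - m * sin u ^ 2)
        (-(m * ((2:ℕ) * sin u ^ 1 * cos u))) u := by
      exact (((hasDerivAt_sin u).pow 2).const_mul m).const_sub 1
    have hden : HasDerivAt (fun u : ℝ => Real.sqrt (1 - m * sin u ^ 2))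
        ((-(m * ((2:ℕ) * sin u ^ 1 * cos u))) / (2 * Real.sqrt (1 - m * sin u ^ 2))) u :=
      hD.sqrt (ne_of_gt (hDpos u))
    have hdiv := hnum.div hden (ne_of_gt (hrpos u))
    refine hdiv.congr_deriv ?_
    symm
    have hr2 : Real.sqrt (1 - m * sin u ^ 2) ^ 2 = 1 - m * sin u ^ 2 :=
      Real.sq_sqrt (hDpos u).le
    have hpyth : sin u ^ 2 + cos u ^ 2 = 1 := sin_sq_add_cos_sq u
    set r := Real.sqrt (1 - m * sin u ^ 2) with hrdef
    have hrne : r ≠ 0 := ne_of_gt (hrpos u)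
    have hDne : 1 - m * sin u ^ 2 ≠ 0 := ne_of_gt (hDpos u)
    field_simp
    linear_combination (2*m - 2*m*cos u^2 - 2*m*sin u^2 + 2*m^2*sin u^2*cos u^2 + 2*r^2
        - 2*r^2*m*sin u^2) * hr2
      + (-2*m + 2*m^2*sin u^2) * hpyth
  have hF0 : F 0 = 0 := by simp [hF]
  have hFpi : F (π/2) = 0 := by simp [hF]
  have hint : ∫ u in (0:ℝ)..(π/2),
      (Real.sqrt (1 - m * sin u ^ 2)
        - (1 - m) * ((1 - m * sin u ^ 2) * Real.sqrt (1 - m * sin u ^ 2))⁻¹) = 0 := by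
    rw [intervalIntegral.integral_eq_sub_of_hasDerivAt (fun u _ => hderiv u)
      ((hc1.sub (continuous_const.mul hc2)).intervalIntegrable _ _), hFpi, hF0, sub_zero]
  have hi2 : IntervalIntegrable
      (fun u : ℝ => (1 - m) * ((1 - m * sin u ^ 2) * Real.sqrt (1 - m * sin u ^ 2))⁻¹)
      MeasureTheory.volume (0:ℝ) (π/2) :=
    (continuous_const.mul hc2 :
      Continuous fun u : ℝ => (1 - m) * ((1 - m * sin u ^ 2) * Real.sqrt (1 - m * sin u ^ 2))⁻¹
      ).intervalIntegrable _ _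
  rw [intervalIntegral.integral_sub (hc1.intervalIntegrable (0:ℝ) (π/2)) hi2,
    intervalIntegral.integral_const_mul] at hint
  linarith

/-- Comparison of the Delzant–Py kernel with the convex-bodies kernel: for `t ≥ 0`,
`(1/2π)∫₀^{2π} |cosh t - sinh t e^{iθ}|⁻³ dθ = (1/2π)∫₀^{2π} √(e^{2t}cos²θ + e^{-2t}sin²θ) dθ`,
both sides being equal to `(2eᵗ/π)·E(√(1-e^{-4t}))` with `E` the complete elliptic integral
of the second kind. -/
theorem delzant_py_kernel_eq_convex_bodies_kernel (t : ℝ) (ht : 0 ≤ t) :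
    (1 / (2 * π)) * (∫ θ in (0:ℝ)..(2 * π),
        (‖(Real.cosh t : ℂ) - Real.sinh t * Complex.exp (θ * Complex.I)‖ ^ 3)⁻¹) =
      (1 / (2 * π)) * (∫ θ in (0:ℝ)..(2 * π),
        Real.sqrt (Real.exp (2 * t) * cos θ ^ 2 + Real.exp (-(2 * t)) * sin θ ^ 2)) ∧
    (1 / (2 * π)) * (∫ θ in (0:ℝ)..(2 * π),
        (‖(Real.cosh t : ℂ) - Real.sinh t * Complex.exp (θ * Complex.I)‖ ^ 3)⁻¹) =
      (2 * Real.exp t / π) *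
        ∫ u in (0:ℝ)..(π / 2),
          Real.sqrt (1 - Real.sqrt (1 - Real.exp (-(4 * t))) ^ 2 * sin u ^ 2) := by
  have hπ : (0:ℝ) < π := Real.pi_pos
  set m : ℝ := 1 - Real.exp (-(4 * t)) with hmdef
  have he1 : Real.exp (-(4 * t)) ≤ 1 := by
    have : Real.exp (-(4 * t)) ≤ Real.exp 0 := Real.exp_le_exp.2 (by linarith)
    simpa using this
  have hepos : 0 < Real.exp (-(4 * t)) := Real.exp_pos _
  have hm0 : 0 ≤ m := by rw [hmdef]; linarith
  have hm1 : m < 1 := by rw [hmdef]; linarith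
  have hexp3 : Real.exp t * Real.exp (-(4 * t)) = Real.exp (-(3 * t)) := by
    rw [← Real.exp_add]; ring_nf
  -- continuity of the two basic integrands
  have hcD : Continuous fun θ : ℝ => 1 - m * sin θ ^ 2 := by continuity
  have hcE : Continuous fun θ : ℝ => Real.sqrt (1 - m * sin θ ^ 2) :=
    Real.continuous_sqrt.comp hcD
  have hDpos : ∀ x : ℝ, x ^ 2 ≤ 1 → 0 < 1 - m * x ^ 2 := by
    intro x hx
    nlinarith [sq_nonneg x]
  have hcI : Continuous fun θ : ℝ => ((1 - m * sin θ ^ 2) * Real.sqrt (1 - m * sin θ ^ 2))⁻¹ := by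
    refine (hcD.mul hcE).inv₀ ?_
    intro θ
    have h := hDpos (sin θ) (sin_sq_le_one θ)
    exact ne_of_gt (mul_pos h (Real.sqrt_pos.2 h))
  -- notation for the two reference integrals
  set I : ℝ := ∫ u in (0:ℝ)..(π/2), ((1 - m * sin u ^ 2) * Real.sqrt (1 - m * sin u ^ 2))⁻¹
    with hIdef
  set E : ℝ := ∫ u in (0:ℝ)..(π/2), Real.sqrt (1 - m * sin u ^ 2) with hEdef
  have hkey : E = (1 - m) * I := elliptic_key' m hm0 hm1
  -- pointwise identity for the Delzant–Py integrand
  have habs : ∀ θ : ℝ,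
      (‖(Real.cosh t : ℂ) - Real.sinh t * Complex.exp (θ * Complex.I)‖ ^ 3)⁻¹
        = ((Real.cosh (2*t) - Real.sinh (2*t) * cos θ) *
            Real.sqrt (Real.cosh (2*t) - Real.sinh (2*t) * cos θ))⁻¹ := by
    intro θ
    have hA0 : 0 ≤ Real.cosh (2*t) - Real.sinh (2*t) * cos θ := by
      have hs : 0 ≤ Real.sinh (2*t) := by
        rw [Real.sinh_eq]
        have := Real.exp_le_exp.2 (show -(2*t) ≤ 2*t by linarith)
        linarith
      nlinarith [Real.cosh_sub_sinh (2*t), Real.exp_pos (-(2*t)), hs,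
        Real.cos_le_one θ, Real.neg_one_le_cos θ]
    have hns : Complex.normSq ((Real.cosh t : ℂ) - Real.sinh t * Complex.exp (θ * Complex.I))
        = Real.cosh (2*t) - Real.sinh (2*t) * cos θ := by
      simp only [Complex.exp_mul_I, Complex.normSq_apply, Complex.sub_re, Complex.sub_im,
        Complex.mul_re, Complex.mul_im, Complex.ofReal_re, Complex.ofReal_im, Complex.add_re,
        Complex.add_im, Complex.I_re, Complex.I_im, Complex.cos_ofReal_re, Complex.cos_ofReal_im,
        Complex.sin_ofReal_re, Complex.sin_ofReal_im]
      have h1 := Real.cosh_two_mul t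
      have h2 := Real.sinh_two_mul t
      have h4 := sin_sq_add_cos_sq θ
      linear_combination (-1) * h1 + cos θ * h2 + Real.sinh t ^ 2 * h4
    rw [Complex.norm_def, hns,
      show (Real.sqrt (Real.cosh (2*t) - Real.sinh (2*t) * cos θ)) ^ 3
          = (Real.cosh (2*t) - Real.sinh (2*t) * cos θ) *
            Real.sqrt (Real.cosh (2*t) - Real.sinh (2*t) * cos θ) by
        rw [show (3:ℕ) = 2 + 1 from rfl, pow_add, pow_one, Real.sq_sqrt hA0]]
  -- half-angle identity
  have hA2 : ∀ u : ℝ, Real.cosh (2*t) - Real.sinh (2*t) * cos (2*u)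
      = Real.exp (2*t) * (1 - m * cos u ^ 2) := by
    intro u
    have h5 : Real.exp (2*t) * Real.exp (-(4*t)) = Real.exp (-(2*t)) := by
      rw [← Real.exp_add]; ring_nf
    rw [hmdef, Real.cos_two_mul, Real.cosh_eq, Real.sinh_eq]
    linear_combination (-(cos u ^ 2)) * h5
  -- scaling of the integrand
  have hsE : Real.sqrt (Real.exp (2*t)) = Real.exp t := by
    rw [show (2:ℝ)*t = t + t by ring, Real.exp_add, Real.sqrt_mul_self (Real.exp_nonneg t)]
  have hscale : ∀ X : ℝ, 0 ≤ X →
      ((Real.exp (2*t) * X) * Real.sqrt (Real.exp (2*t) * X))⁻¹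
        = Real.exp (-(3*t)) * (X * Real.sqrt X)⁻¹ := by
    intro X hX
    rw [Real.sqrt_mul (Real.exp_nonneg _), hsE,
      show Real.exp (2*t) * X * (Real.exp t * Real.sqrt X)
          = Real.exp (2*t) * Real.exp t * (X * Real.sqrt X) by ring,
      ← Real.exp_add, mul_inv, ← Real.exp_neg]
    ring_nf
  -- computation of the Delzant–Py integral
  have hL : (∫ θ in (0:ℝ)..(2 * π),
      (‖(Real.cosh t : ℂ) - Real.sinh t * Complex.exp (θ * Complex.I)‖ ^ 3)⁻¹)
      = 4 * Real.exp (-(3*t)) * I := by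
    have hsub := intervalIntegral.smul_integral_comp_mul_left (a := (0:ℝ)) (b := π)
      (fun θ => ((Real.cosh (2*t) - Real.sinh (2*t) * cos θ) *
          Real.sqrt (Real.cosh (2*t) - Real.sinh (2*t) * cos θ))⁻¹) 2
    simp only [mul_zero] at hsub
    have hcos := integral_cossq_pi' (fun x => ((1 - m * x) * Real.sqrt (1 - m * x))⁻¹) hcI
    calc (∫ θ in (0:ℝ)..(2 * π),
        (‖(Real.cosh t : ℂ) - Real.sinh t * Complex.exp (θ * Complex.I)‖ ^ 3)⁻¹)
        = ∫ θ in (0:ℝ)..(2 * π), ((Real.cosh (2*t) - Real.sinh (2*t) * cos θ) *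
            Real.sqrt (Real.cosh (2*t) - Real.sinh (2*t) * cos θ))⁻¹ := by
          simp only [habs]
      _ = (2:ℝ) • ∫ u in (0:ℝ)..π, ((Real.cosh (2*t) - Real.sinh (2*t) * cos (2*u)) *
            Real.sqrt (Real.cosh (2*t) - Real.sinh (2*t) * cos (2*u)))⁻¹ := by
          exact hsub.symm
      _ = 2 * ∫ u in (0:ℝ)..π,
            Real.exp (-(3*t)) * ((1 - m * cos u ^ 2) * Real.sqrt (1 - m * cos u ^ 2))⁻¹ := by
          rw [smul_eq_mul]
          congr 1
          apply intervalIntegral.integral_congr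
          intro u _
          have hX : (0:ℝ) ≤ 1 - m * cos u ^ 2 := (hDpos (cos u) (cos_sq_le_one u)).le
          simp only
          rw [hA2 u, hscale _ hX]
      _ = 2 * (Real.exp (-(3*t)) *
            ∫ u in (0:ℝ)..π, ((1 - m * cos u ^ 2) * Real.sqrt (1 - m * cos u ^ 2))⁻¹) := by
          rw [intervalIntegral.integral_const_mul]
      _ = 4 * Real.exp (-(3*t)) * I := by
          rw [hcos, hIdef]; ring
  -- computation of the convex-bodies integral
  have hR1 : (∫ θ in (0:ℝ)..(2 * π),
      Real.sqrt (Real.exp (2 * t) * cos θ ^ 2 + Real.exp (-(2 * t)) * sin θ ^ 2))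
      = 4 * Real.exp t * E := by
    have hsin := integral_sinsq_two_pi' (fun x => Real.sqrt (1 - m * x)) hcE
    simp only at hsin
    calc (∫ θ in (0:ℝ)..(2 * π),
        Real.sqrt (Real.exp (2 * t) * cos θ ^ 2 + Real.exp (-(2 * t)) * sin θ ^ 2))
        = ∫ θ in (0:ℝ)..(2 * π), Real.exp t * Real.sqrt (1 - m * sin θ ^ 2) := by
          apply intervalIntegral.integral_congr
          intro θ _
          have h5 : Real.exp (2*t) * Real.exp (-(4*t)) = Real.exp (-(2*t)) := by
            rw [← Real.exp_add]; ring_nf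
          have harg : Real.exp (2 * t) * cos θ ^ 2 + Real.exp (-(2 * t)) * sin θ ^ 2
              = Real.exp (2*t) * (1 - m * sin θ ^ 2) := by
            rw [hmdef]
            linear_combination Real.exp (2*t) * (sin_sq_add_cos_sq θ) - sin θ ^ 2 * h5
          simp only
          rw [harg, Real.sqrt_mul (Real.exp_nonneg _), hsE]
      _ = Real.exp t * ∫ θ in (0:ℝ)..(2 * π), Real.sqrt (1 - m * sin θ ^ 2) := by
          rw [intervalIntegral.integral_const_mul]
      _ = 4 * Real.exp t * E := by
          rw [hsin, hEdef]; ring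
  -- the right-hand side of the second claim
  have hR2 : (∫ u in (0:ℝ)..(π / 2),
      Real.sqrt (1 - Real.sqrt (1 - Real.exp (-(4 * t))) ^ 2 * sin u ^ 2)) = E := by
    rw [hEdef]
    apply intervalIntegral.integral_congr
    intro u _
    simp only
    rw [← hmdef, Real.sq_sqrt hm0]
  constructor
  · rw [hL, hR1, hkey, hmdef]
    linear_combination (-(2 / π)) * I * hexp3
  · rw [hL, hR2, hkey, hmdef]
    linear_combination (-(2 / π)) * I * hexp3
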